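/- Let M be a t × t matrix over Z_m (m ≥ 2). Then rank(M)/log m ≤ colrank(M) ≤ rank(M), where log denotes logarithm base 2. -/

import Mathlib

/-- The rank of a square matrix over `ZMod m`: the smallest `r` such that `M = A * B`
with `A` a `t × r` matrix and `B` an `r × t` matrix. -/
noncomputable def mrank {m t : ℕ} (M : Matrix (Fin t) (Fin t) (ZMod m)) : ℕ :=
  sInf {r : ℕ | ∃ (A : Matrix (Fin t) (Fin r) (ZMod m)) (B : Matrix (Fin r) (Fin t) (ZMod m)),
    M = A * B}

/-- The column rank of a square matrix over `ZMod m`: `log_m` of the size of the additive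
subgroup of `(ZMod m)^t` generated by the columns of `M`. -/
noncomputable def colrank {m t : ℕ} (M : Matrix (Fin t) (Fin t) (ZMod m)) : ℝ :=
  Real.logb (m : ℝ)
    (((AddSubgroup.closure (Set.range fun j => fun i => M i j) :
      AddSubgroup (Fin t → ZMod m)) : Set (Fin t → ZMod m)).ncard : ℝ)

/-- Claim 4.3: `rank(M)/log m ≤ colrank(M) ≤ rank(M)`. -/
theorem rank_colrank_relation (m t : ℕ) (hm : 2 ≤ m) (M : Matrix (Fin t) (Fin t) (ZMod m)) :
    (mrank M : ℝ) / Real.logb 2 (m : ℝ) ≤ colrank M ∧ colrank M ≤ (mrank M : ℝ) := by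
  classical
  haveI : NeZero m := ⟨by omega⟩
  have hm1 : (1 : ℝ) < (m : ℝ) := by exact_mod_cast hm.trans_lt' one_lt_two
  set G : AddSubgroup (Fin t → ZMod m) :=
    AddSubgroup.closure (Set.range fun j => fun i => M i j) with hGdef
  have hNcard : ((G : Set (Fin t → ZMod m)).ncard) = Nat.card ↥G := by
    rw [← Nat.card_coe_set_eq]; rfl
  have hNpos : 0 < Nat.card ↥G := Nat.card_pos
  -- the defining set for mrank is nonempty
  have hex : ∃ (A : Matrix (Fin t) (Fin (mrank M)) (ZMod m))
      (B : Matrix (Fin (mrank M)) (Fin t) (ZMod m)), M = A * B :=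
    Nat.sInf_mem (⟨t, M, 1, (Matrix.mul_one M).symm⟩ :
      Set.Nonempty {r : ℕ | ∃ (A : Matrix (Fin t) (Fin r) (ZMod m))
        (B : Matrix (Fin r) (Fin t) (ZMod m)), M = A * B})
  -- upper bound on the cardinality: |G| ≤ m ^ mrank M
  have hGle : Nat.card ↥G ≤ m ^ mrank M := by
    obtain ⟨A, B, hAB⟩ := hex
    set f : (Fin (mrank M) → ZMod m) →+ (Fin t → ZMod m) :=
      A.mulVecLin.toAddMonoidHom with hfdef
    have hle : G ≤ f.range := by
      rw [hGdef]
      apply AddSubgroup.closure_le _ |>.2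
      rintro _ ⟨j, rfl⟩
      refine ⟨fun k => B k j, ?_⟩
      funext i
      simp [hfdef, hAB, Matrix.mulVec, Matrix.mul_apply, dotProduct]
    calc Nat.card ↥G ≤ Nat.card ↥f.range := AddSubgroup.card_le_of_le hle
      _ ≤ Nat.card (Fin (mrank M) → ZMod m) := by
          have : (f.range : Set (Fin t → ZMod m)) = Set.range f := by
            ext x; simp [AddMonoidHom.mem_range]
          rw [show (↥f.range : Type _) = ↥(f.range : Set (Fin t → ZMod m)) from rfl]
          rw [this]
          exact Finite.card_range_le f
      _ = m ^ mrank M := by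
          simp [Nat.card_eq_fintype_card, ZMod.card]
  -- lower bound on the cardinality: 2 ^ mrank M ≤ |G|
  have h2le : 2 ^ mrank M ≤ Nat.card ↥G := by
    obtain ⟨ι, hι, n, hn, ⟨e⟩⟩ := AddCommGroup.equiv_directSum_zmod_of_finite' ↥G
    haveI := hι
    haveI : ∀ i, NeZero (n i) := fun i => ⟨by have := hn i; omega⟩
    have hcard2 : Nat.card ↥G = ∏ i, n i := by
      have e2 : (DirectSum ι fun i => ZMod (n i)) ≃ (∀ i, ZMod (n i)) :=
        DFinsupp.equivFunOnFintype
      rw [Nat.card_congr e.toEquiv, Nat.card_congr e2]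
      simp [Nat.card_eq_fintype_card, ZMod.card]
    have hrle : mrank M ≤ Fintype.card ι := by
      set σ : ι ≃ Fin (Fintype.card ι) := Fintype.equivFin ι with hσ
      set g : ι → (Fin t → ZMod m) := fun i =>
        ((e.symm (DirectSum.of (fun i => ZMod (n i)) i 1)) : Fin t → ZMod m) with hg
      have hcol : ∀ j, (fun i => M i j) ∈ G := fun j =>
        AddSubgroup.subset_closure ⟨j, rfl⟩
      set c : Fin t → ↥G := fun j => ⟨fun i => M i j, hcol j⟩ with hc
      set v : ι → Fin t → ℕ := fun i j => ((e (c j)) i).val with hv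
      have hdecomp : ∀ j, (fun i => M i j) = ∑ i : ι, v i j • g i := by
        intro j
        have h1 : c j = ∑ i : ι, v i j • e.symm (DirectSum.of (fun i => ZMod (n i)) i 1) := by
          apply e.injective
          rw [map_sum]
          simp only [map_nsmul, AddEquiv.apply_symm_apply]
          rw [← DirectSum.sum_univ_of (e (c j))]
          refine Finset.sum_congr rfl fun i _ => ?_
          rw [← map_nsmul]
          congr 1
          rw [nsmul_eq_mul, mul_one]
          exact (ZMod.natCast_rightInverse _).symm
        have := congrArg G.subtype h1
        simpa [map_sum, map_nsmul, hg] using this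
      set A : Matrix (Fin t) (Fin (Fintype.card ι)) (ZMod m) :=
        fun x k => g (σ.symm k) x with hA
      set B : Matrix (Fin (Fintype.card ι)) (Fin t) (ZMod m) :=
        fun k j => (v (σ.symm k) j : ZMod m) with hB
      have hMAB : M = A * B := by
        ext x j
        have hx := congrFun (hdecomp j) x
        simp only [Finset.sum_apply, Pi.smul_apply] at hx
        rw [Matrix.mul_apply, hx]
        rw [← Equiv.sum_comp σ (fun k => A x k * B k j)]
        refine Finset.sum_congr rfl fun i _ => ?_
        simp [hA, hB, nsmul_eq_mul, mul_comm]
      exact Nat.sInf_le ⟨A, B, hMAB⟩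
    calc 2 ^ mrank M ≤ 2 ^ Fintype.card ι := Nat.pow_le_pow_right (by norm_num) hrle
      _ = ∏ _i : ι, 2 := by simp
      _ ≤ ∏ i, n i := Finset.prod_le_prod' fun i _ => (hn i)
      _ = Nat.card ↥G := hcard2.symm
  -- now convert to the real statements
  have hNpos' : (0 : ℝ) < ((G : Set (Fin t → ZMod m)).ncard : ℝ) := by
    rw [hNcard]; exact_mod_cast hNpos
  constructor
  · -- lower bound
    have hlog2m : 0 < Real.logb 2 (m : ℝ) := Real.logb_pos one_lt_two hm1
    rw [div_le_iff₀ hlog2m]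
    have hkey : (mrank M : ℝ) ≤ Real.logb 2 ((G : Set (Fin t → ZMod m)).ncard : ℝ) := by
      rw [Real.le_logb_iff_rpow_le one_lt_two hNpos']
      rw [Real.rpow_natCast]
      rw [hNcard]
      exact_mod_cast h2le
    have heq : colrank M * Real.logb 2 (m : ℝ)
        = Real.logb 2 ((G : Set (Fin t → ZMod m)).ncard : ℝ) := by
      show Real.logb (m : ℝ) _ * _ = _
      unfold Real.logb
      have hlogm : Real.log (m : ℝ) ≠ 0 := ne_of_gt (Real.log_pos hm1)
      have hlog2 : Real.log 2 ≠ 0 := ne_of_gt (Real.log_pos one_lt_two)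
      field_simp
      rfl
    rw [heq]; exact hkey
  · -- upper bound
    show Real.logb (m : ℝ) _ ≤ _
    calc Real.logb (m : ℝ) ((G : Set (Fin t → ZMod m)).ncard : ℝ)
        ≤ Real.logb (m : ℝ) ((m : ℝ) ^ mrank M) := by
          apply Real.logb_le_logb_of_le hm1 hNpos'
          rw [hNcard]
          exact_mod_cast hGle
      _ = (mrank M : ℝ) := by
          rw [Real.logb_pow, Real.logb_self_eq_one hm1]
          ring
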